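/- Let X₁,…,Xₙ be independent random elements of a separable metrizable topological group G, and set x^j_k = X_{j+1} ⋯ X_k for j ≤ k ≤ n. Let U be a symmetric measurable neighborhood of the identity and α ∈ [0,1) such that P(x^0_j ∉ U) ≤ α for all j ≤ n. Then (1 − α) · P(∃ j ≤ n : x^j_n ∉ U·U) ≤ P(x^0_n ∉ U). -/

import Mathlib

open MeasureTheory ProbabilityTheory Pointwise
open scoped ENNReal

def partialProd {Ω G : Type*} [Monoid G] (X : ℕ → Ω → G) (j k : ℕ) (ω : Ω) : G :=
  ((List.range' (j + 1) (k - j)).map (fun i => X i ω)).prod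

private lemma measurable_listProd {G E : Type*} [Monoid G] [MeasurableSpace G] [MeasurableMul₂ G]
    [MeasurableSpace E] (l : List ℕ) (f : ℕ → E → G) (hf : ∀ i, Measurable (f i)) :
    Measurable fun z => (l.map (fun i => f i z)).prod := by
  induction l with
  | nil => simpa using measurable_const
  | cons a l ih => simpa [List.map_cons, List.prod_cons] using (show Measurable fun z => f a z * (l.map (fun i => f i z)).prod from (hf a).mul ih)

private lemma measurable_partialProd {G Ω : Type*} [Monoid G] [MeasurableSpace G]
    [MeasurableMul₂ G] [MeasurableSpace Ω] (X : ℕ → Ω → G) (hX : ∀ i, Measurable (X i))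
    (j k : ℕ) : Measurable (partialProd X j k) :=
  measurable_listProd _ X hX

private lemma partialProd_split {Ω G : Type*} [Monoid G] (X : ℕ → Ω → G) {j m k : ℕ}
    (hjm : j ≤ m) (hmk : m ≤ k) (ω : Ω) :
    partialProd X j k ω = partialProd X j m ω * partialProd X m k ω := by
  unfold partialProd
  rw [← List.prod_append, ← List.map_append]
  have h1 : j + 1 + (m - j) = m + 1 := by omega
  have h2 : k - j = (k - m) + (m - j) := by omega
  rw [h2, Nat.add_comm (k-m) (m-j), ← List.range'_append_1 (s := j+1) (m := m-j) (n := k-m), h1]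

private def oscW {Ω G : Type*} (X : ℕ → Ω → G) (n k : ℕ) (ω : Ω) :
    {i : ℕ // i ∈ Finset.Icc (k+1) n} → G := fun i => X i ω

private def oscV {Ω G : Type*} (X : ℕ → Ω → G) (j : ℕ) (ω : Ω) :
    {i : ℕ // i ∈ Finset.Icc 1 j} → G := fun i => X i ω

private def oscPhi {G : Type*} [Monoid G] (n j k : ℕ)
    (z : {i : ℕ // i ∈ Finset.Icc (j+1) n} → G) : G :=
  ((List.range' (k+1) (n-k)).map
    (fun i => if h : i ∈ Finset.Icc (j+1) n then z ⟨i, h⟩ else 1)).prod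

private def oscPsi {G : Type*} [Monoid G] (j : ℕ)
    (z : {i : ℕ // i ∈ Finset.Icc 1 j} → G) : G :=
  ((List.range' 1 j).map (fun i => if h : i ∈ Finset.Icc 1 j then z ⟨i, h⟩ else 1)).prod

private def oscRes {G : Type*} [One G] (n j k : ℕ)
    (z : {i : ℕ // i ∈ Finset.Icc (j+1) n} → G) :
    {i : ℕ // i ∈ Finset.Icc (k+1) n} → G :=
  fun i => if h : (i : ℕ) ∈ Finset.Icc (j+1) n then z ⟨i, h⟩ else 1

private lemma measurable_oscW {Ω G : Type*} [MeasurableSpace Ω] [MeasurableSpace G]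
    (X : ℕ → Ω → G) (hX : ∀ i, Measurable (X i)) (n k : ℕ) : Measurable (oscW X n k) :=
  measurable_pi_lambda _ fun i => hX i

private lemma measurable_oscV {Ω G : Type*} [MeasurableSpace Ω] [MeasurableSpace G]
    (X : ℕ → Ω → G) (hX : ∀ i, Measurable (X i)) (j : ℕ) : Measurable (oscV X j) :=
  measurable_pi_lambda _ fun i => hX i

private lemma measurable_oscPhi {G : Type*} [Monoid G] [MeasurableSpace G] [MeasurableMul₂ G]
    (n j k : ℕ) : Measurable (oscPhi (G := G) n j k) := by
  refine measurable_listProd _ _ (fun i => ?_)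
  by_cases h : i ∈ Finset.Icc (j+1) n
  · simpa [h] using measurable_pi_apply (⟨i, h⟩ : {i : ℕ // i ∈ Finset.Icc (j+1) n})
  · simpa [h] using measurable_const

private lemma measurable_oscPsi {G : Type*} [Monoid G] [MeasurableSpace G] [MeasurableMul₂ G]
    (j : ℕ) : Measurable (oscPsi (G := G) j) := by
  refine measurable_listProd _ _ (fun i => ?_)
  by_cases h : i ∈ Finset.Icc 1 j
  · simpa [h] using measurable_pi_apply (⟨i, h⟩ : {i : ℕ // i ∈ Finset.Icc 1 j})
  · simpa [h] using measurable_const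

private lemma measurable_oscRes {G : Type*} [One G] [MeasurableSpace G] (n j k : ℕ) :
    Measurable (oscRes (G := G) n j k) := by
  refine measurable_pi_lambda _ fun i => ?_
  by_cases h : (i : ℕ) ∈ Finset.Icc (j+1) n
  · simpa [oscRes, h] using measurable_pi_apply (⟨i, h⟩ : {i : ℕ // i ∈ Finset.Icc (j+1) n})
  · simpa [oscRes, h] using measurable_const

private lemma oscPhi_comp {Ω G : Type*} [Monoid G] (X : ℕ → Ω → G) {n j k : ℕ} (hjk : j ≤ k)
    (ω : Ω) : oscPhi n j k (oscW X n j ω) = partialProd X k n ω := by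
  unfold oscPhi oscW partialProd
  congr 1
  refine List.map_congr_left fun i hi => ?_
  rw [List.mem_range'_1] at hi
  have h : i ∈ Finset.Icc (j+1) n := by rw [Finset.mem_Icc]; omega
  simp [h]

private lemma oscPsi_comp {Ω G : Type*} [Monoid G] (X : ℕ → Ω → G) (j : ℕ) (ω : Ω) :
    oscPsi j (oscV X j ω) = partialProd X 0 j ω := by
  unfold oscPsi oscV partialProd
  congr 1
  refine List.map_congr_left fun i hi => ?_
  rw [List.mem_range'_1] at hi
  have h : i ∈ Finset.Icc 1 j := by rw [Finset.mem_Icc]; omega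
  simp [h]

private lemma oscRes_comp {Ω G : Type*} [One G] (X : ℕ → Ω → G) {n j k : ℕ} (hjk : j ≤ k)
    (ω : Ω) : oscRes n j k (oscW X n j ω) = oscW X n k ω := by
  funext i
  have h2 := i.2
  rw [Finset.mem_Icc] at h2
  have h : (i : ℕ) ∈ Finset.Icc (j+1) n := by rw [Finset.mem_Icc]; omega
  simp [oscRes, oscW, h]

private lemma prod_null_of_hull {E F : Type*} [MeasurableSpace E] [MeasurableSpace F]
    (ρ₁ : Measure E) (ρ₂ : Measure F) [IsFiniteMeasure ρ₁] [SFinite ρ₂]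
    {D H : Set E} (hDH : D ⊆ H) (hhull : ρ₁ H = ρ₁ D)
    {K : Set (E × F)} (hK : MeasurableSet K) (hKH : ∀ p ∈ K, p.1 ∈ H)
    (hKD : ∀ p ∈ K, p.1 ∉ D) : ρ₁.prod ρ₂ K = 0 := by
  rw [Measure.prod_apply hK]
  have hmeasf : Measurable fun x => ρ₂ (Prod.mk x ⁻¹' K) :=
    measurable_measure_prodMk_left hK
  set Gs := {x | ρ₂ (Prod.mk x ⁻¹' K) ≠ 0} with hGsdef
  have hGsm : MeasurableSet Gs := hmeasf (measurableSet_singleton 0).compl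
  have hsub : Gs ⊆ H \ D := by
    intro x hx
    have hx' : ρ₂ (Prod.mk x ⁻¹' K) ≠ 0 := hx
    have hne : (Prod.mk x ⁻¹' K).Nonempty := by
      rw [Set.nonempty_iff_ne_empty]
      intro hemp
      exact hx' (by rw [hemp]; exact measure_empty)
    obtain ⟨y, hy⟩ := hne
    exact ⟨hKH _ hy, fun hD => hKD _ hy hD⟩
  have h1 : ρ₁ H ≤ ρ₁ (H \ Gs) := by
    rw [hhull]
    exact measure_mono (fun x hx => ⟨hDH hx, fun hG => (hsub hG).2 hx⟩)
  have h2 : ρ₁ (H \ Gs) + ρ₁ (H ∩ Gs) = ρ₁ H := measure_diff_add_inter H hGsm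
  have h3 : ρ₁ (H ∩ Gs) = 0 := by
    by_contra h0
    have hlt : ρ₁ (H \ Gs) < ρ₁ (H \ Gs) + ρ₁ (H ∩ Gs) :=
      ENNReal.lt_add_right (measure_ne_top ρ₁ _) h0
    rw [h2] at hlt
    exact absurd h1 (not_le.mpr hlt)
  have h4 : ρ₁ Gs = 0 := by
    have he : Gs = H ∩ Gs := (Set.inter_eq_self_of_subset_right (fun x hx => (hsub hx).1)).symm
    rw [he, h3]
  rw [lintegral_eq_zero_iff hmeasf]
  exact ae_iff.mpr (by simpa using h4)

theorem maximum_oscillation_bound {Ω G : Type*} [MeasurableSpace Ω]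
    {μ : Measure Ω} [IsProbabilityMeasure μ]
    [Group G] [TopologicalSpace G] [IsTopologicalGroup G]
    [TopologicalSpace.SeparableSpace G] [TopologicalSpace.MetrizableSpace G]
    [MeasurableSpace G] [BorelSpace G]
    (n : ℕ) (X : ℕ → Ω → G) (hmeas : ∀ i, Measurable (X i))
    (hindep : iIndepFun X μ)
    (U : Set G) (hU : MeasurableSet U) (hUnhds : U ∈ nhds (1 : G))
    (hUsymm : ∀ g ∈ U, g⁻¹ ∈ U)
    (α : ℝ≥0∞) (hα : α < 1)
    (hbound : ∀ j ≤ n, μ {ω | partialProd X 0 j ω ∉ U} ≤ α) :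
    (1 - α) * μ {ω | ∃ j ≤ n, partialProd X j n ω ∉ U * U}
      ≤ μ {ω | partialProd X 0 n ω ∉ U} := by
  classical
  haveI : SecondCountableTopology G := by
    letI := TopologicalSpace.metrizableSpaceMetric G
    exact UniformSpace.secondCountable_of_separable G
  -- measurability of the basic maps
  have hWm : ∀ k, Measurable (oscW (G := G) X n k) := measurable_oscW X hmeas n
  have hVm : ∀ j, Measurable (oscV (G := G) X j) := measurable_oscV X hmeas
  -- measurable hulls of the (possibly non-measurable) events
  have hex : ∀ k : ℕ, ∃ Hk : Set ({i : ℕ // i ∈ Finset.Icc (k+1) n} → G),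
      {z | oscPhi n k k z ∉ U * U} ⊆ Hk ∧ MeasurableSet Hk ∧
        (μ.map (oscW X n k)) Hk = (μ.map (oscW X n k)) {z | oscPhi n k k z ∉ U * U} :=
    fun k => exists_measurable_superset _ _
  choose Hs hDH hHmeas hHhull using hex
  -- the sets M j in the coordinate spaces, and the events A j in Ω
  set M : (j : ℕ) → Set ({i : ℕ // i ∈ Finset.Icc (j+1) n} → G) :=
    fun j => Hs j ∩ ⋂ k ∈ Finset.Ioc j n, (oscRes n j k ⁻¹' Hs k)ᶜ with hMdef
  have hMmeas : ∀ j, MeasurableSet (M j) := by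
    intro j
    refine (hHmeas j).inter (Set.Finite.measurableSet_biInter (Finset.finite_toSet _)
      (fun k _ => ((measurable_oscRes n j k) (hHmeas k)).compl))
  set A : ℕ → Set Ω := fun j => (oscW X n j) ⁻¹' (M j) with hAdef
  have hAmeas : ∀ j, MeasurableSet (A j) := fun j => hWm j (hMmeas j)
  -- membership characterization of A j
  have hAmem : ∀ j ω, ω ∈ A j ↔
      (oscW X n j ω ∈ Hs j ∧ ∀ k, j < k → k ≤ n → oscW X n k ω ∉ Hs k) := by
    intro j ω
    simp only [hAdef, hMdef, Set.mem_preimage, Set.mem_inter_iff, Set.mem_iInter,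
      Set.mem_compl_iff, Finset.mem_Ioc]
    constructor
    · rintro ⟨h1, h2⟩
      refine ⟨h1, fun k hk1 hk2 => ?_⟩
      have := h2 k ⟨hk1, hk2⟩
      rwa [oscRes_comp X (le_of_lt hk1) ω] at this
    · rintro ⟨h1, h2⟩
      refine ⟨h1, fun k hk => ?_⟩
      rw [oscRes_comp X (le_of_lt hk.1) ω]
      exact h2 k hk.1 hk.2
  -- pairwise disjointness of the A j
  have hAdisj : ∀ j1 ∈ Finset.range (n+1), ∀ j2 ∈ Finset.range (n+1), j1 ≠ j2 →
      Disjoint (A j1) (A j2) := by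
    have hlt : ∀ j1 j2, j2 ≤ n → j1 < j2 → Disjoint (A j1) (A j2) := by
      intro j1 j2 h2n h12
      rw [Set.disjoint_left]
      intro ω hω1 hω2
      exact ((hAmem j1 ω).mp hω1).2 j2 h12 h2n ((hAmem j2 ω).mp hω2).1
    intro j1 h1 j2 h2 hne
    rw [Finset.mem_range] at h1 h2
    rcases lt_or_gt_of_ne hne with h | h
    · exact hlt j1 j2 (by omega) h
    · exact (hlt j2 j1 (by omega) h).symm
  -- the union of the A j covers the event in question
  have hcover : {ω | ∃ j ≤ n, partialProd X j n ω ∉ U * U} ⊆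
      ⋃ j ∈ Finset.range (n+1), A j := by
    intro ω hω
    obtain ⟨j, hj, hjU⟩ := hω
    have hPj : oscW X n j ω ∈ Hs j := by
      refine hDH j ?_
      show oscPhi n j j (oscW X n j ω) ∉ U * U
      rwa [oscPhi_comp X le_rfl ω]
    set P : ℕ → Prop := fun k => oscW X n k ω ∈ Hs k with hPdef
    have hm1 : P (Nat.findGreatest P n) := Nat.findGreatest_spec hj hPj
    have hmle : Nat.findGreatest P n ≤ n := Nat.findGreatest_le n
    refine Set.mem_biUnion (Finset.mem_range.mpr (Nat.lt_succ_of_le hmle)) ?_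
    rw [hAmem (Nat.findGreatest P n) ω]
    exact ⟨hm1, fun k hk1 hk2 => Nat.findGreatest_is_greatest hk1 hk2⟩
  -- the "good" event
  set Good : Set Ω := partialProd X 0 n ⁻¹' U with hGooddef
  have hGoodm : MeasurableSet Good := measurable_partialProd X hmeas 0 n hU
  -- the key per-index estimate
  have key : ∀ j ∈ Finset.range (n+1),
      (1 - α) * μ (A j) ≤ μ ((A j ∩ partialProd X 0 j ⁻¹' U) \ Good) := by
    intro j hj
    rw [Finset.mem_range] at hj
    have hjn : j ≤ n := by omega
    haveI : IsProbabilityMeasure (μ.map (oscW X n j)) :=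
      Measure.isProbabilityMeasure_map (hWm j).aemeasurable
    haveI : IsProbabilityMeasure (μ.map (oscV X j)) :=
      Measure.isProbabilityMeasure_map (hVm j).aemeasurable
    have hdisj : Disjoint (Finset.Icc (j+1) n) (Finset.Icc 1 j) := by
      rw [Finset.disjoint_left]
      intro a ha hb
      rw [Finset.mem_Icc] at ha hb
      omega
    have hindepWV : IndepFun (oscW X n j) (oscV X j) μ :=
      hindep.indepFun_finset _ _ hdisj hmeas
    have hmap : μ.map (fun ω => (oscW X n j ω, oscV X j ω)) =
        (μ.map (oscW X n j)).prod (μ.map (oscV X j)) :=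
      (indepFun_iff_map_prod_eq_prod_map_map (hWm j).aemeasurable
        (hVm j).aemeasurable).mp hindepWV
    have hPm : Measurable (fun ω => (oscW X n j ω, oscV X j ω)) :=
      (hWm j).prodMk (hVm j)
    have hRm : MeasurableSet (oscPsi (G := G) j ⁻¹' U) := measurable_oscPsi j hU
    have hCeq : partialProd X 0 j ⁻¹' U = oscV X j ⁻¹' (oscPsi j ⁻¹' U) := by
      ext ω
      simp only [Set.mem_preimage, oscPsi_comp X j ω]
    -- rectangle computation
    have hpre1 : A j ∩ oscV X j ⁻¹' (oscPsi j ⁻¹' U) =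
        (fun ω => (oscW X n j ω, oscV X j ω)) ⁻¹' ((M j) ×ˢ (oscPsi j ⁻¹' U)) := by
      ext ω
      simp only [hAdef, Set.mem_inter_iff, Set.mem_preimage, Set.mem_prod]
    have hrect : μ (A j ∩ oscV X j ⁻¹' (oscPsi j ⁻¹' U)) =
        μ (A j) * μ (oscV X j ⁻¹' (oscPsi j ⁻¹' U)) := by
      rw [hpre1, ← Measure.map_apply hPm ((hMmeas j).prod hRm), hmap, Measure.prod_prod,
        Measure.map_apply (hWm j) (hMmeas j), Measure.map_apply (hVm j) hRm]
    -- null part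
    have hnull : μ ((A j ∩ oscV X j ⁻¹' (oscPsi j ⁻¹' U)) ∩ Good) = 0 := by
      set Kt : Set (({i : ℕ // i ∈ Finset.Icc (j+1) n} → G) × ({i : ℕ // i ∈ Finset.Icc 1 j} → G)) :=
        ((M j) ×ˢ (oscPsi j ⁻¹' U)) ∩ ((fun p => oscPsi j p.2 * oscPhi n j j p.1) ⁻¹' U)
        with hKtdef
      have hKtm : MeasurableSet Kt := by
        refine ((hMmeas j).prod hRm).inter ?_
        exact (((measurable_oscPsi j).comp measurable_snd).mul
          ((measurable_oscPhi n j j).comp measurable_fst)) hU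
      have hpre2 : (A j ∩ oscV X j ⁻¹' (oscPsi j ⁻¹' U)) ∩ Good =
          (fun ω => (oscW X n j ω, oscV X j ω)) ⁻¹' Kt := by
        ext ω
        simp only [hKtdef, hAdef, hGooddef, Set.mem_inter_iff, Set.mem_preimage, Set.mem_prod]
        have hsplit : partialProd X 0 n ω =
            oscPsi j (oscV X j ω) * oscPhi n j j (oscW X n j ω) := by
          rw [oscPsi_comp X j ω, oscPhi_comp X le_rfl ω]
          exact partialProd_split X (Nat.zero_le j) hjn ω
        rw [hsplit]
      rw [hpre2, ← Measure.map_apply hPm hKtm, hmap]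
      refine prod_null_of_hull _ _ (hDH j) (hHhull j) hKtm ?_ ?_
      · rintro p ⟨⟨hp1, _⟩, _⟩
        exact hp1.1
      · rintro p ⟨⟨_, hp2⟩, hp3⟩ hpD
        have hΦ : oscPhi n j j p.1 ∈ U * U := by
          have := Set.mul_mem_mul (hUsymm _ hp2) hp3
          rwa [inv_mul_cancel_left] at this
        exact hpD hΦ
    -- lower bound on μ (C j)
    have hCub : (1 : ℝ≥0∞) - α ≤ μ (oscV X j ⁻¹' (oscPsi j ⁻¹' U)) := by
      rw [← hCeq]
      have hCm : MeasurableSet (partialProd X 0 j ⁻¹' U) :=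
        measurable_partialProd X hmeas 0 j hU
      have h1 : μ ((partialProd X 0 j ⁻¹' U)ᶜ) ≤ α := hbound j hjn
      calc (1 : ℝ≥0∞) - α ≤ 1 - μ ((partialProd X 0 j ⁻¹' U)ᶜ) := tsub_le_tsub_left h1 1
        _ = 1 - (1 - μ (partialProd X 0 j ⁻¹' U)) := by rw [prob_compl_eq_one_sub hCm]
        _ = μ (partialProd X 0 j ⁻¹' U) :=
            ENNReal.sub_sub_cancel ENNReal.one_ne_top prob_le_one
    -- assemble
    calc (1 - α) * μ (A j) ≤ μ (oscV X j ⁻¹' (oscPsi j ⁻¹' U)) * μ (A j) :=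
          mul_le_mul_left hCub _
      _ = μ (A j ∩ oscV X j ⁻¹' (oscPsi j ⁻¹' U)) := by rw [hrect, mul_comm]
      _ = μ ((A j ∩ oscV X j ⁻¹' (oscPsi j ⁻¹' U)) ∩ Good) +
            μ ((A j ∩ oscV X j ⁻¹' (oscPsi j ⁻¹' U)) \ Good) :=
          (measure_inter_add_diff _ hGoodm).symm
      _ = μ ((A j ∩ oscV X j ⁻¹' (oscPsi j ⁻¹' U)) \ Good) := by rw [hnull, zero_add]
      _ = μ ((A j ∩ partialProd X 0 j ⁻¹' U) \ Good) := by rw [hCeq]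
  -- final assembly
  have hFmeas : ∀ j ∈ Finset.range (n+1),
      MeasurableSet ((A j ∩ partialProd X 0 j ⁻¹' U) \ Good) := fun j _ =>
    ((hAmeas j).inter (measurable_partialProd X hmeas 0 j hU)).diff hGoodm
  have hFdisj : Set.PairwiseDisjoint ↑(Finset.range (n+1))
      (fun j => (A j ∩ partialProd X 0 j ⁻¹' U) \ Good) := by
    intro a ha b hb hab
    have hsa : (A a ∩ partialProd X 0 a ⁻¹' U) \ Good ⊆ A a :=
      (Set.diff_subset).trans Set.inter_subset_left
    have hsb : (A b ∩ partialProd X 0 b ⁻¹' U) \ Good ⊆ A b :=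
      (Set.diff_subset).trans Set.inter_subset_left
    exact (hAdisj a ha b hb hab).mono hsa hsb
  calc (1 - α) * μ {ω | ∃ j ≤ n, partialProd X j n ω ∉ U * U}
      ≤ (1 - α) * μ (⋃ j ∈ Finset.range (n+1), A j) :=
        mul_le_mul_right (measure_mono hcover) _
    _ ≤ (1 - α) * ∑ j ∈ Finset.range (n+1), μ (A j) :=
        mul_le_mul_right (measure_biUnion_finset_le _ _) _
    _ = ∑ j ∈ Finset.range (n+1), (1 - α) * μ (A j) := Finset.mul_sum _ _ _
    _ ≤ ∑ j ∈ Finset.range (n+1), μ ((A j ∩ partialProd X 0 j ⁻¹' U) \ Good) :=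
        Finset.sum_le_sum key
    _ = μ (⋃ j ∈ Finset.range (n+1), (A j ∩ partialProd X 0 j ⁻¹' U) \ Good) :=
        (measure_biUnion_finset hFdisj hFmeas).symm
    _ ≤ μ {ω | partialProd X 0 n ω ∉ U} := by
        refine measure_mono ?_
        intro ω hω
        simp only [Set.mem_iUnion] at hω
        obtain ⟨j, _, hωF⟩ := hω
        exact hωF.2
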